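/- (Nochka) Given hyperplanes H_1, ..., H_q (q > 2N − k + 1) in ℙ^k(ℂ) located in N-subgeneral position, there exist rational numbers ω(1), ..., ω(q) and θ such that: (i) 0 < ω(j) ≤ θ ≤ 1 for all j; (ii) Σ_{j=1}^q ω(j) = k + 1 + θ(q − 2N + k − 1); (iii) (k+1)/(2N−k+1) ≤ θ ≤ (k+1)/(N+1); (iv) for every subset R of {1,...,q} with 0 < #R ≤ N+1, Σ_{j∈R} ω(j) ≤ d(R), where d(R) is the dimension of the span of the normal vectors of the hyperplanes indexed by R. -/

import Mathlib

open Finset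

variable {q k : ℕ}

/-- d(R): the dimension of the span of the normal vectors A_j, j ∈ R. -/
noncomputable def dimSpan (A : Fin q → (Fin (k + 1) → ℂ)) (R : Finset (Fin q)) : ℕ :=
  Module.finrank ℂ (Submodule.span ℂ (A '' (R : Set (Fin q))))

/-- The hyperplanes with normal vectors A_j are in N-subgeneral position if every
subset of at least N+1 indices spans ℂ^{k+1}. -/
def SubgeneralPosition (N : ℕ) (A : Fin q → (Fin (k + 1) → ℂ)) : Prop :=
  ∀ R : Finset (Fin q), N + 1 ≤ R.card → dimSpan A R = k + 1

namespace NochkaAux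

variable {q : ℕ}

/-- subsets of `R` of cardinality at most `N` -/
def Fam (N : ℕ) (R : Finset (Fin q)) : Finset (Finset (Fin q)) :=
  R.powerset.filter (fun S => S.card ≤ N)

lemma mem_Fam {N : ℕ} {R S : Finset (Fin q)} : S ∈ Fam N R ↔ S ⊆ R ∧ S.card ≤ N := by
  simp [Fam, Finset.mem_filter, Finset.mem_powerset]

lemma Fam_nonempty (N : ℕ) (R : Finset (Fin q)) : (Fam N R).Nonempty :=
  ⟨∅, mem_Fam.2 ⟨Finset.empty_subset _, by simp⟩⟩

variable (d : Finset (Fin q) → ℕ) (θ : ℚ)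

/-- density value -/
def nval (S : Finset (Fin q)) : ℚ := (d S : ℚ) - θ * S.card

/-- minimum of `nval` over small subsets -/
def mm (N : ℕ) (R : Finset (Fin q)) : ℚ := (Fam N R).inf' (Fam_nonempty N R) (nval d θ)

/-- the rank-like function -/
def ff (N : ℕ) (R : Finset (Fin q)) : ℚ := θ * R.card + mm d θ N R

lemma mm_le {N : ℕ} {R S : Finset (Fin q)} (hSR : S ⊆ R) (hSN : S.card ≤ N) :
    mm d θ N R ≤ nval d θ S :=
  Finset.inf'_le _ (mem_Fam.2 ⟨hSR, hSN⟩)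

lemma mm_nonpos {N : ℕ} (R : Finset (Fin q)) (hd0 : d ∅ = 0) : mm d θ N R ≤ 0 := by
  have := mm_le d θ (Finset.empty_subset R) (by simp : (∅ : Finset (Fin q)).card ≤ N)
  simpa [nval, hd0] using this

lemma exists_mm (N : ℕ) (R : Finset (Fin q)) :
    ∃ T, (T ⊆ R ∧ T.card ≤ N) ∧ nval d θ T = mm d θ N R ∧
      ∀ S, S ⊆ R → S.card ≤ N → nval d θ S = mm d θ N R → T.card ≤ S.card := by
  classical
  obtain ⟨T₁, hT₁, hval₁⟩ := Finset.exists_mem_eq_inf' (Fam_nonempty N R) (nval d θ)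
  have hne : ((Fam N R).filter (fun S => nval d θ S = mm d θ N R)).Nonempty :=
    ⟨T₁, Finset.mem_filter.2 ⟨hT₁, hval₁.symm⟩⟩
  obtain ⟨T, hTmem, hTmin⟩ := Finset.exists_min_image _ Finset.card hne
  rw [Finset.mem_filter] at hTmem
  refine ⟨T, mem_Fam.1 hTmem.1, hTmem.2, fun S hS hSN hSval => ?_⟩
  exact hTmin S (Finset.mem_filter.2 ⟨mem_Fam.2 ⟨hS, hSN⟩, hSval⟩)

/-- self-optimal: strictly better than all proper subsets -/
def SelfOpt (T : Finset (Fin q)) : Prop := ∀ S : Finset (Fin q), S ⊂ T → nval d θ T < nval d θ S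

lemma minCard_selfOpt {N : ℕ} {R T : Finset (Fin q)} (hTR : T ⊆ R) (hTN : T.card ≤ N)
    (hval : nval d θ T = mm d θ N R)
    (hmin : ∀ S, S ⊆ R → S.card ≤ N → nval d θ S = mm d θ N R → T.card ≤ S.card) :
    SelfOpt d θ T := by
  intro S hS
  have hSR : S ⊆ R := (hS.subset).trans hTR
  have hSN : S.card ≤ N := le_trans (Finset.card_le_card hS.subset) hTN
  have h1 : mm d θ N R ≤ nval d θ S := mm_le d θ hSR hSN
  rcases lt_or_eq_of_le h1 with h | h
  · rw [hval]; exact h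
  · exfalso
    have := hmin S hSR hSN h.symm
    exact absurd (Finset.card_lt_card hS) (not_lt.2 this)

lemma nval_submod (hdsub : ∀ R S : Finset (Fin q), d (R ∪ S) + d (R ∩ S) ≤ d R + d S)
    (X Y : Finset (Fin q)) :
    nval d θ (X ∪ Y) + nval d θ (X ∩ Y) ≤ nval d θ X + nval d θ Y := by
  classical
  have h1 := hdsub X Y
  have h2 : (X ∪ Y).card + (X ∩ Y).card = X.card + Y.card := Finset.card_union_add_card_inter X Y
  have h1' : ((d (X ∪ Y) : ℚ)) + (d (X ∩ Y) : ℚ) ≤ (d X : ℚ) + (d Y : ℚ) := by exact_mod_cast h1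
  have h2' : ((X ∪ Y).card : ℚ) + ((X ∩ Y).card : ℚ) = (X.card : ℚ) + (Y.card : ℚ) := by
    exact_mod_cast h2
  have h3 : θ * ((X ∪ Y).card : ℚ) + θ * ((X ∩ Y).card : ℚ)
      = θ * (X.card : ℚ) + θ * (Y.card : ℚ) := by
    rw [← mul_add, ← mul_add, h2']
  simp only [nval]
  linarith [h1', h3]

end NochkaAux

namespace NochkaAux2
open NochkaAux

variable {q N k : ℕ} {d : Finset (Fin q) → ℕ} {θ : ℚ}

/-- Every nonempty self-optimal set is contained in any ratio-maximizer `S₀`. -/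
lemma selfOpt_subset
    (hd0 : d ∅ = 0)
    (hdsub : ∀ R S : Finset (Fin q), d (R ∪ S) + d (R ∩ S) ≤ d R + d S)
    (hdfull : ∀ R : Finset (Fin q), N + 1 ≤ R.card → d R = k + 1)
    (hTI : ∀ S : Finset (Fin q), S.card ≤ N →
      ((k : ℚ) + 1) - d S ≤ θ * ((2 * (N:ℚ) - k + 1) - S.card))
    (hlb : ∀ S : Finset (Fin q), S.card ≤ N + 1 → (S.card : ℚ) - ((N : ℚ) - k) ≤ d S)
    (hθ0 : 0 ≤ θ) (hθ1 : θ ≤ 1) (hθN : θ ≤ ((k : ℚ) + 1) / ((N : ℚ) + 1))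
    {S₀ : Finset (Fin q)} (hS₀N : S₀.card ≤ N)
    (hval₀ : nval d θ S₀ = (k : ℚ) + 1 - θ * (2 * (N:ℚ) - k + 1))
    {T : Finset (Fin q)} (hT : SelfOpt d θ T) (hTne : T.Nonempty) (hTN : T.card ≤ N) :
    T ⊆ S₀ := by
  classical
  by_contra hTS
  -- basic facts about T
  have hvalT : nval d θ T < 0 := by
    have h := hT ∅ (Finset.empty_ssubset.2 hTne)
    simpa [nval, hd0] using h
  have hdTlt : (d T : ℚ) < θ * T.card := by
    have : (d T : ℚ) - θ * T.card < 0 := hvalT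
    linarith
  have hTcard : (T.card : ℚ) - ((N : ℚ) - k) ≤ d T := hlb T (le_trans hTN (Nat.le_succ N))
  have h1 : (1 - θ) * (T.card : ℚ) < (N : ℚ) - k := by nlinarith
  have he : (0 : ℚ) < (N : ℚ) - k := by
    have hc0 : (0:ℚ) ≤ (T.card : ℚ) := Nat.cast_nonneg _
    nlinarith
  have hθlt1 : θ < 1 := by
    have hN1 : (0:ℚ) < (N : ℚ) + 1 := by positivity
    have : ((k : ℚ) + 1) / ((N : ℚ) + 1) < 1 := by
      rw [div_lt_one hN1]; linarith
    linarith
  -- size bound for S₀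
  have hdS₀ : (d S₀ : ℚ) = (k : ℚ) + 1 - θ * (2 * (N:ℚ) - k + 1) + θ * S₀.card := by
    have : nval d θ S₀ = (d S₀ : ℚ) - θ * S₀.card := rfl
    linarith [hval₀.symm.trans this]
  have h2 : (1 - θ) * (S₀.card : ℚ) ≤ (N : ℚ) + 1 - θ * (2 * (N:ℚ) - k + 1) := by
    have := hlb S₀ (le_trans hS₀N (Nat.le_succ N))
    nlinarith
  -- union is small
  have hUcard : ((S₀ ∪ T).card : ℚ) ≤ 2 * (N:ℚ) - k + 1 := by
    have hle : ((S₀ ∪ T).card : ℚ) ≤ (S₀.card : ℚ) + T.card := by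
      exact_mod_cast Finset.card_union_le S₀ T
    have hsum : (1 - θ) * ((S₀.card : ℚ) + T.card) < (1 - θ) * (2 * (N:ℚ) - k + 1) := by
      have : (1 - θ) * ((S₀.card : ℚ) + T.card)
          = (1 - θ) * (S₀.card : ℚ) + (1 - θ) * (T.card : ℚ) := by ring
      rw [this]
      have hrhs : (N : ℚ) + 1 - θ * (2 * (N:ℚ) - k + 1) + ((N : ℚ) - k)
          = (1 - θ) * (2 * (N:ℚ) - k + 1) := by ring
      linarith
    have h1θ : (0:ℚ) < 1 - θ := by linarith
    have := lt_of_mul_lt_mul_left hsum (le_of_lt h1θ)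
    linarith
  -- lower bound on nval of the union
  have hW : (k : ℚ) + 1 - θ * (2 * (N:ℚ) - k + 1) ≤ nval d θ (S₀ ∪ T) := by
    by_cases hc : (S₀ ∪ T).card ≤ N
    · have := hTI (S₀ ∪ T) hc
      simp only [nval]; linarith
    · push_neg at hc
      have hfull := hdfull (S₀ ∪ T) hc
      have : nval d θ (S₀ ∪ T) = (k : ℚ) + 1 - θ * (S₀ ∪ T).card := by
        simp only [nval, hfull]
        push_cast
        ring
      rw [this]
      have := mul_le_mul_of_nonneg_left hUcard hθ0
      linarith
  -- upper bound via submodularity and self-optimality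
  have hI : S₀ ∩ T ⊂ T := by
    refine Finset.ssubset_iff_subset_ne.2 ⟨Finset.inter_subset_right, fun h => ?_⟩
    exact hTS (Finset.inter_eq_right.1 h)
  have hsel := hT (S₀ ∩ T) hI
  have hsub2 := nval_submod d θ hdsub S₀ T
  rw [hval₀] at hsub2
  linarith

end NochkaAux2

namespace NochkaAux3
open NochkaAux NochkaAux2

variable {q N k : ℕ} {d : Finset (Fin q) → ℕ} {θ : ℚ}

lemma ff_empty (hd0 : d ∅ = 0) : ff d θ N ∅ = 0 := by
  have h1 : mm d θ N ∅ ≤ 0 := mm_nonpos d θ ∅ hd0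
  have h2 : 0 ≤ mm d θ N ∅ := by
    apply Finset.le_inf'
    intro S hS
    obtain ⟨hS1, _⟩ := mem_Fam.1 hS
    have : S = ∅ := Finset.subset_empty.1 hS1
    simp [this, nval, hd0]
  simp [ff, le_antisymm h1 h2]

lemma mm_mono_aux (hdmono : ∀ R S : Finset (Fin q), R ⊆ S → d R ≤ d S)
    (hθ0 : 0 ≤ θ) {X Y : Finset (Fin q)} (hXY : X ⊆ Y) :
    mm d θ N X ≤ mm d θ N Y + θ * ((Y.card : ℚ) - X.card) := by
  classical
  obtain ⟨T, ⟨hTY, hTN⟩, hTval, _⟩ := exists_mm d θ N Y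
  have hcand : mm d θ N X ≤ nval d θ (T ∩ X) :=
    mm_le d θ Finset.inter_subset_right
      (le_trans (Finset.card_le_card Finset.inter_subset_left) hTN)
  have hd1 : (d (T ∩ X) : ℚ) ≤ (d T : ℚ) := by
    exact_mod_cast hdmono _ _ Finset.inter_subset_left
  have e1 : (T ∩ X).card + (T \ X).card = T.card := Finset.card_inter_add_card_sdiff T X
  have e2 : (T \ X).card ≤ (Y \ X).card :=
    Finset.card_le_card (Finset.sdiff_subset_sdiff hTY (Finset.Subset.refl X))
  have e3 : (Y \ X).card + X.card = Y.card := Finset.card_sdiff_add_card_eq_card hXY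
  have e4 : T.card + X.card ≤ (T ∩ X).card + Y.card := by omega
  have e4' : (T.card : ℚ) + X.card ≤ ((T ∩ X).card : ℚ) + Y.card := by exact_mod_cast e4
  have e5 : θ * ((T.card : ℚ) - (T ∩ X).card) ≤ θ * ((Y.card : ℚ) - X.card) :=
    mul_le_mul_of_nonneg_left (by linarith) hθ0
  have : nval d θ (T ∩ X) ≤ nval d θ T + θ * ((Y.card : ℚ) - X.card) := by
    simp only [nval]; linarith
  rw [hTval] at this
  linarith

lemma ff_mono (hdmono : ∀ R S : Finset (Fin q), R ⊆ S → d R ≤ d S)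
    (hθ0 : 0 ≤ θ) {X Y : Finset (Fin q)} (hXY : X ⊆ Y) :
    ff d θ N X ≤ ff d θ N Y := by
  have h1 := mm_mono_aux (N := N) hdmono hθ0 hXY
  simp only [ff]
  linarith

lemma ff_nonneg (hd0 : d ∅ = 0) (hdmono : ∀ R S : Finset (Fin q), R ⊆ S → d R ≤ d S)
    (hθ0 : 0 ≤ θ) (R : Finset (Fin q)) : 0 ≤ ff d θ N R := by
  have := ff_mono (N := N) (d := d) (θ := θ) hdmono hθ0 (Finset.empty_subset R)
  rw [ff_empty hd0] at this
  exact this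

lemma mm_anti {X Y : Finset (Fin q)} (hXY : X ⊆ Y) : mm d θ N Y ≤ mm d θ N X := by
  classical
  obtain ⟨T, ⟨hTX, hTN⟩, hTval, _⟩ := exists_mm d θ N X
  have := mm_le d θ (hTX.trans hXY) hTN
  rw [hTval] at this
  exact this

lemma ff_insert_le (hθ0 : 0 ≤ θ) (x : Fin q) (A : Finset (Fin q)) :
    ff d θ N (insert x A) ≤ ff d θ N A + θ := by
  classical
  have h1 : mm d θ N (insert x A) ≤ mm d θ N A := mm_anti (Finset.subset_insert x A)
  have h2 : ((insert x A).card : ℚ) ≤ (A.card : ℚ) + 1 := by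
    exact_mod_cast Finset.card_insert_le x A
  have h3 := mul_le_mul_of_nonneg_left h2 hθ0
  simp only [ff]
  linarith

lemma ff_singleton (hd0 : d ∅ = 0) (hdone : ∀ j : Fin q, d {j} = 1) (hθ1 : θ ≤ 1)
    (j : Fin q) : ff d θ N {j} = θ := by
  classical
  have h1 : mm d θ N {j} ≤ 0 := mm_nonpos d θ _ hd0
  have h2 : 0 ≤ mm d θ N {j} := by
    apply Finset.le_inf'
    intro S hS
    obtain ⟨hS1, _⟩ := mem_Fam.1 hS
    rcases Finset.subset_singleton_iff.1 hS1 with h | h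
    · simp [h, nval, hd0]
    · simp [h, nval, hdone j]; linarith
  have : mm d θ N {j} = 0 := le_antisymm h1 h2
  simp [ff, this]

lemma ff_le_d {R : Finset (Fin q)} (hRN : R.card ≤ N) : ff d θ N R ≤ (d R : ℚ) := by
  have := mm_le d θ (Finset.Subset.refl R) hRN
  simp only [ff, nval] at *
  linarith

lemma mm_ge (hTI : ∀ S : Finset (Fin q), S.card ≤ N →
      ((k : ℚ) + 1) - d S ≤ θ * ((2 * (N:ℚ) - k + 1) - S.card))
    (R : Finset (Fin q)) :
    (k : ℚ) + 1 - θ * (2 * (N:ℚ) - k + 1) ≤ mm d θ N R := by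
  apply Finset.le_inf'
  intro S hS
  obtain ⟨_, hSN⟩ := mem_Fam.1 hS
  have := hTI S hSN
  simp only [nval]
  linarith

/-- submodularity of `ff` -/
lemma ff_submod
    (hd0 : d ∅ = 0)
    (hdmono : ∀ R S : Finset (Fin q), R ⊆ S → d R ≤ d S)
    (hdsub : ∀ R S : Finset (Fin q), d (R ∪ S) + d (R ∩ S) ≤ d R + d S)
    (hdfull : ∀ R : Finset (Fin q), N + 1 ≤ R.card → d R = k + 1)
    (hTI : ∀ S : Finset (Fin q), S.card ≤ N →
      ((k : ℚ) + 1) - d S ≤ θ * ((2 * (N:ℚ) - k + 1) - S.card))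
    (hlb : ∀ S : Finset (Fin q), S.card ≤ N + 1 → (S.card : ℚ) - ((N : ℚ) - k) ≤ d S)
    (hθ0 : 0 ≤ θ) (hθ1 : θ ≤ 1) (hθN : θ ≤ ((k : ℚ) + 1) / ((N : ℚ) + 1))
    {S₀ : Finset (Fin q)} (hS₀N : S₀.card ≤ N)
    (hval₀ : nval d θ S₀ = (k : ℚ) + 1 - θ * (2 * (N:ℚ) - k + 1))
    (X Y : Finset (Fin q)) :
    ff d θ N (X ∪ Y) + ff d θ N (X ∩ Y) ≤ ff d θ N X + ff d θ N Y := by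
  classical
  obtain ⟨T1, ⟨hT1X, hT1N⟩, hT1val, hT1min⟩ := exists_mm d θ N X
  obtain ⟨T2, ⟨hT2Y, hT2N⟩, hT2val, hT2min⟩ := exists_mm d θ N Y
  have hso1 : SelfOpt d θ T1 := minCard_selfOpt d θ hT1X hT1N hT1val hT1min
  have hso2 : SelfOpt d θ T2 := minCard_selfOpt d θ hT2Y hT2N hT2val hT2min
  -- the union of the two optima is small
  have hUN : (T1 ∪ T2).card ≤ N := by
    rcases Finset.eq_empty_or_nonempty T1 with h1 | h1
    · simpa [h1] using hT2N
    rcases Finset.eq_empty_or_nonempty T2 with h2 | h2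
    · simpa [h2] using hT1N
    have hs1 : T1 ⊆ S₀ := selfOpt_subset hd0 hdsub hdfull hTI hlb hθ0 hθ1 hθN hS₀N hval₀
      hso1 h1 hT1N
    have hs2 : T2 ⊆ S₀ := selfOpt_subset hd0 hdsub hdfull hTI hlb hθ0 hθ1 hθN hS₀N hval₀
      hso2 h2 hT2N
    exact le_trans (Finset.card_le_card (Finset.union_subset hs1 hs2)) hS₀N
  have hmmU : mm d θ N (X ∪ Y) ≤ nval d θ (T1 ∪ T2) :=
    mm_le d θ (Finset.union_subset_union hT1X hT2Y) hUN
  have hmmI : mm d θ N (X ∩ Y) ≤ nval d θ (T1 ∩ T2) :=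
    mm_le d θ (Finset.inter_subset_inter hT1X hT2Y)
      (le_trans (Finset.card_le_card Finset.inter_subset_left) hT1N)
  have hsub := nval_submod d θ hdsub T1 T2
  have hcard : ((X ∪ Y).card : ℚ) + ((X ∩ Y).card : ℚ) = (X.card : ℚ) + (Y.card : ℚ) := by
    exact_mod_cast Finset.card_union_add_card_inter X Y
  have hθcard : θ * ((X ∪ Y).card : ℚ) + θ * ((X ∩ Y).card : ℚ)
      = θ * (X.card : ℚ) + θ * (Y.card : ℚ) := by
    rw [← mul_add, ← mul_add, hcard]
  simp only [ff]
  rw [← hT1val, ← hT2val] at *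
  linarith

/-- Greedy vector for a submodular, monotone, normalized function, with designated
first element `j₀`. -/
lemma greedy (F : Finset (Fin q) → ℚ) (θ : ℚ)
    (hF0 : F ∅ = 0)
    (hmono : ∀ A B : Finset (Fin q), A ⊆ B → F A ≤ F B)
    (hmarg : ∀ (x : Fin q) (A : Finset (Fin q)), F (insert x A) ≤ F A + θ)
    (hsub : ∀ X Y : Finset (Fin q), F (X ∪ Y) + F (X ∩ Y) ≤ F X + F Y)
    (hsingle : ∀ j : Fin q, F {j} = θ)
    (j₀ : Fin q) :
    ∃ v : Fin q → ℚ, (∀ i, 0 ≤ v i ∧ v i ≤ θ) ∧ v j₀ = θ ∧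
      (∑ i, v i) = F Finset.univ ∧ ∀ R : Finset (Fin q), (∑ i ∈ R, v i) ≤ F R := by
  classical
  have hFnonneg : ∀ R, 0 ≤ F R := fun R => by
    have := hmono ∅ R (Finset.empty_subset R); rw [hF0] at this; exact this
  have hθ0 : 0 ≤ θ := by
    have := hFnonneg {j₀}; rwa [hsingle j₀] at this
  -- main induction
  have main : ∀ B : Finset (Fin q), j₀ ∉ B →
      ∃ v : Fin q → ℚ, (∀ i, 0 ≤ v i ∧ v i ≤ θ) ∧ v j₀ = θ ∧
        (∀ i, i ∉ insert j₀ B → v i = 0) ∧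
        (∑ i ∈ insert j₀ B, v i) = F (insert j₀ B) ∧
        ∀ R : Finset (Fin q), (∑ i ∈ R, v i) ≤ F R := by
    intro B
    induction B using Finset.induction_on with
    | empty =>
      intro _
      refine ⟨fun i => if i = j₀ then θ else 0, ?_, by simp, ?_, ?_, ?_⟩
      · intro i
        by_cases h : i = j₀ <;> simp [h] <;> exact hθ0
      · intro i hi
        simp at hi
        simp [hi]
      · simp [hsingle j₀]
      · intro R
        by_cases h : j₀ ∈ R
        · have : (∑ i ∈ R, if i = j₀ then θ else 0) = θ := by
            rw [Finset.sum_ite_eq' R j₀ (fun _ => θ)]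
            simp [h]
          rw [this, ← hsingle j₀]
          exact hmono _ _ (Finset.singleton_subset_iff.2 h)
        · have : (∑ i ∈ R, if i = j₀ then θ else 0) = 0 := by
            rw [Finset.sum_ite_eq' R j₀ (fun _ => θ)]
            simp [h]
          rw [this]
          exact hFnonneg R
    | @insert x B hxB ih =>
      intro hj₀
      have hj₀B : j₀ ∉ B := fun h => hj₀ (Finset.mem_insert_of_mem h)
      have hxj₀ : x ≠ j₀ := fun h => hj₀ (h ▸ Finset.mem_insert_self x B)
      obtain ⟨v, hv01, hvj₀, hvsupp, hvsum, hvcon⟩ := ih hj₀B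
      set A := insert j₀ B with hA
      have hxA : x ∉ A := by
        simp [hA, Finset.mem_insert]
        exact ⟨fun h => hxj₀ h, hxB⟩
      set c : ℚ := F (insert x A) - F A with hc
      refine ⟨fun i => if i = x then c else v i, ?_, ?_, ?_, ?_, ?_⟩
      · intro i
        dsimp only
        by_cases h : i = x
        · rw [h, if_pos rfl]
          constructor
          · have := hmono A (insert x A) (Finset.subset_insert x A)
            simp only [hc]; linarith
          · have := hmarg x A
            simp only [hc]; linarith
        · rw [if_neg h]; exact hv01 i
      · dsimp only
        rw [if_neg (fun h => hxj₀ (Eq.symm h))]; exact hvj₀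
      · intro i hi
        dsimp only
        have hix : i ≠ x := by
          intro h
          apply hi
          rw [h, Finset.insert_comm]
          exact Finset.mem_insert_self x (insert j₀ B)
        have hiB : i ∉ insert j₀ B := by
          intro h
          apply hi
          rw [Finset.insert_comm]
          exact Finset.mem_insert_of_mem h
        rw [if_neg hix]
        exact hvsupp i hiB
      · have hcomm : insert j₀ (insert x B) = insert x A := by rw [hA, Finset.insert_comm]
        rw [hcomm]
        rw [Finset.sum_insert hxA]
        have : (∑ i ∈ A, if i = x then c else v i) = ∑ i ∈ A, v i := by
          apply Finset.sum_congr rfl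
          intro i hiA
          have : i ≠ x := fun h => hxA (h ▸ hiA)
          simp [this]
        rw [this, hvsum, if_pos rfl, hc]
        ring
      · intro R
        -- restrict to the support
        have hsplit : (∑ i ∈ R, if i = x then c else v i)
            = (∑ i ∈ R ∩ insert x A, if i = x then c else v i) := by
          rw [← Finset.sum_subset (Finset.inter_subset_left (s₁ := R) (s₂ := insert x A))]
          intro i hiR hiI
          have hiA : i ∉ insert x A := fun h => hiI (Finset.mem_inter.2 ⟨hiR, h⟩)
          have hix : i ≠ x := fun h => hiA (h ▸ Finset.mem_insert_self x A)
          have : i ∉ A := fun h => hiA (Finset.mem_insert_of_mem h)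
          simp [hix, hvsupp i this]
        rw [hsplit]
        set R' := R ∩ insert x A with hR'
        have hR'sub : R' ⊆ insert x A := Finset.inter_subset_right
        have hFR' : F R' ≤ F R := hmono _ _ Finset.inter_subset_left
        by_cases hxR : x ∈ R'
        · have hR'A : R' ∩ A = R'.erase x := by
            ext i
            simp only [Finset.mem_inter, Finset.mem_erase]
            constructor
            · rintro ⟨hiR, hiA⟩
              exact ⟨fun h => hxA (h ▸ hiA), hiR⟩
            · rintro ⟨hix, hiR⟩
              refine ⟨hiR, ?_⟩
              rcases Finset.mem_insert.1 (hR'sub hiR) with h | h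
              · exact absurd h hix
              · exact h
          have hR'union : R' ∪ A = insert x A := by
            apply Finset.Subset.antisymm
            · exact Finset.union_subset hR'sub (Finset.subset_insert x A)
            · intro i hi
              rcases Finset.mem_insert.1 hi with h | h
              · exact Finset.mem_union_left _ (h ▸ hxR)
              · exact Finset.mem_union_right _ h
          have hs := hsub R' A
          rw [hR'union, hR'A] at hs
          have hsum2 : (∑ i ∈ R', if i = x then c else v i)
              = c + ∑ i ∈ R'.erase x, v i := by
            rw [← Finset.add_sum_erase _ _ hxR, if_pos rfl]
            congr 1
            apply Finset.sum_congr rfl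
            intro i hi
            simp [Finset.ne_of_mem_erase hi]
          rw [hsum2]
          have := hvcon (R'.erase x)
          simp only [hc]
          linarith
        · have hsum2 : (∑ i ∈ R', if i = x then c else v i) = ∑ i ∈ R', v i := by
            apply Finset.sum_congr rfl
            intro i hi
            have hix : i ≠ x := by
              intro h
              exact hxR (h ▸ hi)
            simp [hix]
          rw [hsum2]
          exact le_trans (hvcon R') hFR'
  obtain ⟨v, hv01, hvj₀, hvsupp, hvsum, hvcon⟩ := main (Finset.univ.erase j₀)
    (Finset.notMem_erase j₀ _)
  have huniv : insert j₀ (Finset.univ.erase j₀) = (Finset.univ : Finset (Fin q)) :=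
    Finset.insert_erase (Finset.mem_univ j₀)
  rw [huniv] at hvsum
  exact ⟨v, hv01, hvj₀, hvsum, hvcon⟩

set_option maxHeartbeats 2000000 in
theorem nochka_core (q N k : ℕ) (hNk : k ≤ N) (hq : 2 * N + 1 < q + k)
    (d : Finset (Fin q) → ℕ)
    (hd0 : d ∅ = 0)
    (hdmono : ∀ R S : Finset (Fin q), R ⊆ S → d R ≤ d S)
    (hdsub : ∀ R S : Finset (Fin q), d (R ∪ S) + d (R ∩ S) ≤ d R + d S)
    (hdcard : ∀ R : Finset (Fin q), d R ≤ R.card)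
    (hdone : ∀ j : Fin q, d {j} = 1)
    (hdfull : ∀ R : Finset (Fin q), N + 1 ≤ R.card → d R = k + 1) :
    ∃ (ω : Fin q → ℚ) (θ : ℚ),
      (∀ j, 0 < ω j ∧ ω j ≤ θ) ∧ θ ≤ 1 ∧
      (∑ j, ω j) = (k : ℚ) + 1 + θ * ((q : ℚ) - 2 * (N : ℚ) + (k : ℚ) - 1) ∧
      ((k : ℚ) + 1) / (2 * (N : ℚ) - (k : ℚ) + 1) ≤ θ ∧
      θ ≤ ((k : ℚ) + 1) / ((N : ℚ) + 1) ∧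
      ∀ R : Finset (Fin q), 0 < R.card → R.card ≤ N + 1 →
        (∑ j ∈ R, ω j) ≤ (d R : ℚ) := by
  classical
  have hqN : N + 2 ≤ q := by omega
  have hq0 : 0 < q := by omega
  have hNkq : (k : ℚ) ≤ (N : ℚ) := by exact_mod_cast hNk
  have hMN : (N : ℚ) + 1 ≤ 2 * (N:ℚ) - k + 1 := by linarith
  have hMpos : (0:ℚ) < 2 * (N:ℚ) - k + 1 := by linarith
  -- the ratio function and θ
  set ρ : Finset (Fin q) → ℚ := fun S => ((k:ℚ) + 1 - d S) / (2 * (N:ℚ) - k + 1 - S.card)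
    with hρdef
  have hden : ∀ S : Finset (Fin q), S.card ≤ N → (0:ℚ) < 2 * (N:ℚ) - k + 1 - S.card := by
    intro S hS
    have : (S.card : ℚ) ≤ N := by exact_mod_cast hS
    linarith
  set θ : ℚ := (Fam N (Finset.univ : Finset (Fin q))).sup'
    (Fam_nonempty N Finset.univ) ρ with hθdef
  have hρθ : ∀ S : Finset (Fin q), S.card ≤ N → ρ S ≤ θ := fun S h =>
    Finset.le_sup' ρ (mem_Fam.2 ⟨Finset.subset_univ S, h⟩)
  have hTI : ∀ S : Finset (Fin q), S.card ≤ N →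
      ((k : ℚ) + 1) - d S ≤ θ * ((2 * (N:ℚ) - k + 1) - S.card) := by
    intro S hS
    have h1 := hρθ S hS
    have h2 := hden S hS
    rw [hρdef] at h1
    simp only at h1
    rw [div_le_iff₀ h2] at h1
    linarith
  have hθM : ((k:ℚ)+1) / (2 * (N:ℚ) - k + 1) ≤ θ := by
    have h1 := hρθ ∅ (by simp)
    have h2 : ρ ∅ = ((k:ℚ)+1) / (2 * (N:ℚ) - k + 1) := by
      simp [hρdef, hd0]
    rw [h2] at h1
    exact h1
  have hθpos : (0:ℚ) < θ :=
    lt_of_lt_of_le (div_pos (by positivity) hMpos) hθM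
  have hθ0 : (0:ℚ) ≤ θ := le_of_lt hθpos
  -- the lower bound from subgeneral position
  have hlb : ∀ S : Finset (Fin q), S.card ≤ N + 1 → (S.card : ℚ) - ((N : ℚ) - k) ≤ d S := by
    intro S hS
    obtain ⟨S', hSS', hS'card⟩ := Finset.exists_superset_card_eq hS
      (by simp only [Fintype.card_fin]; omega)
    have h1 : d S' = k + 1 := hdfull S' (le_of_eq hS'card.symm)
    have h2 := hdsub S (S' \ S)
    have h3 : S ∪ (S' \ S) = S' := Finset.union_sdiff_of_subset hSS'
    have h4 : S ∩ (S' \ S) = ∅ := Finset.inter_sdiff_self S S'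
    have h5 : d (S' \ S) ≤ (S' \ S).card := hdcard _
    have h6 : (S' \ S).card + S.card = S'.card := Finset.card_sdiff_add_card_eq_card hSS'
    rw [h3, h4, h1, hd0] at h2
    have h7 : k + 1 + S.card ≤ d S + (N + 1) := by omega
    have h7' : (k:ℚ) + 1 + S.card ≤ (d S : ℚ) + (N + 1) := by exact_mod_cast h7
    linarith
  -- upper bound for θ
  have hθN : θ ≤ ((k : ℚ) + 1) / ((N : ℚ) + 1) := by
    apply Finset.sup'_le
    intro S hSmem
    obtain ⟨-, hSN⟩ := mem_Fam.1 hSmem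
    have hden' := hden S hSN
    rw [hρdef]
    simp only
    rw [div_le_div_iff₀ hden' (by positivity)]
    have hcast : (S.card : ℚ) ≤ (N : ℚ) := by exact_mod_cast hSN
    rcases Finset.eq_empty_or_nonempty S with h | h
    · subst h
      simp only [hd0, Finset.card_empty, Nat.cast_zero, Nat.cast_zero]
      nlinarith
    · obtain ⟨j, hj⟩ := h
      have h1 : (1:ℚ) ≤ (d S : ℚ) := by
        have := hdmono {j} S (Finset.singleton_subset_iff.2 hj)
        rw [hdone j] at this
        exact_mod_cast this
      have h2 := hlb S (hSN.trans (Nat.le_succ N))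
      by_cases hcase : (S.card : ℚ) ≤ (N:ℚ) - k + 1
      · have h3 : ((N:ℚ)+1) * 1 ≤ ((N:ℚ)+1) * (d S : ℚ) :=
          mul_le_mul_of_nonneg_left h1 (by positivity)
        have h4 : ((k:ℚ)+1) * (S.card : ℚ) ≤ ((k:ℚ)+1) * ((N:ℚ) - k + 1) :=
          mul_le_mul_of_nonneg_left hcase (by positivity)
        nlinarith
      · push_neg at hcase
        have ha : (0:ℚ) ≤ (S.card : ℚ) - ((N:ℚ) - k) := by linarith
        have h7 : ((S.card : ℚ) - ((N:ℚ) - k)) * ((k:ℚ)+1)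
            ≤ ((S.card : ℚ) - ((N:ℚ) - k)) * ((N:ℚ)+1) :=
          mul_le_mul_of_nonneg_left (by linarith) ha
        have h8 : ((S.card : ℚ) - ((N:ℚ) - k)) * ((N:ℚ)+1) ≤ (d S : ℚ) * ((N:ℚ)+1) :=
          mul_le_mul_of_nonneg_right h2 (by positivity)
        nlinarith
  have hθ1 : θ ≤ 1 := by
    refine le_trans hθN ?_
    rw [div_le_one (by positivity)]
    linarith
  -- the maximizer
  obtain ⟨S₀, hS₀mem, hS₀eq⟩ := Finset.exists_mem_eq_sup' (Fam_nonempty N Finset.univ) ρ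
  obtain ⟨-, hS₀N⟩ := mem_Fam.1 hS₀mem
  have hval₀ : nval d θ S₀ = (k : ℚ) + 1 - θ * (2 * (N:ℚ) - k + 1) := by
    have hdenS₀ := hden S₀ hS₀N
    have hmul : θ * (2 * (N:ℚ) - k + 1 - S₀.card) = (k:ℚ) + 1 - d S₀ := by
      rw [hθdef, hS₀eq, hρdef]
      simp only
      rw [div_mul_cancel₀ _ (ne_of_gt hdenS₀)]
    simp only [nval]
    linarith
  -- the rank-like function F and its properties
  set F : Finset (Fin q) → ℚ := ff d θ N with hFdef
  have hF0 : F ∅ = 0 := ff_empty hd0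
  have hFmono : ∀ A B : Finset (Fin q), A ⊆ B → F A ≤ F B := fun A B h =>
    ff_mono hdmono hθ0 h
  have hFmarg : ∀ (x : Fin q) (A : Finset (Fin q)), F (insert x A) ≤ F A + θ := fun x A =>
    ff_insert_le hθ0 x A
  have hFsub : ∀ X Y : Finset (Fin q), F (X ∪ Y) + F (X ∩ Y) ≤ F X + F Y := fun X Y =>
    ff_submod hd0 hdmono hdsub hdfull hTI hlb hθ0 hθ1 hθN hS₀N hval₀ X Y
  have hFsingle : ∀ j : Fin q, F {j} = θ := fun j => ff_singleton hd0 hdone hθ1 j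
  have hFnonneg : ∀ R : Finset (Fin q), 0 ≤ F R := fun R =>
    ff_nonneg hd0 hdmono hθ0 R
  -- greedy vectors, one for each designated element
  choose v hv01 hvj hvsum hvcon using fun j₀ : Fin q =>
    greedy F θ hF0 hFmono hFmarg hFsub hFsingle j₀
  -- the target sum
  set t : ℚ := (k : ℚ) + 1 + θ * ((q : ℚ) - 2 * (N : ℚ) + (k : ℚ) - 1) with htdef
  have hqM : (2*(N:ℚ) - k + 1) + 1 ≤ (q:ℚ) := by
    have : (2*N + 1 + 1 : ℚ) ≤ (q:ℚ) + k := by exact_mod_cast hq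
    linarith
  have ht_pos : 0 < t := by
    have h1 : (0:ℚ) < θ * ((q : ℚ) - 2 * (N : ℚ) + (k : ℚ) - 1) :=
      mul_pos hθpos (by linarith)
    rw [htdef]
    positivity
  have hcarduniv : ((Finset.univ : Finset (Fin q)).card : ℚ) = (q : ℚ) := by
    simp [Finset.card_univ]
  have hFuniv_ge : t ≤ F Finset.univ := by
    have h1 := mm_ge (d := d) (θ := θ) (k := k) hTI Finset.univ
    have h2 : F Finset.univ = θ * ((Finset.univ : Finset (Fin q)).card : ℚ)
        + mm d θ N Finset.univ := rfl
    rw [h2, hcarduniv, htdef]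
    nlinarith
  have hFuniv_pos : 0 < F Finset.univ := lt_of_lt_of_le ht_pos hFuniv_ge
  have hqQ : (0:ℚ) < (q:ℚ) := by exact_mod_cast hq0
  -- the weights
  set c : ℚ := t / ((q:ℚ) * F Finset.univ) with hcdef
  have hc_pos : 0 < c := div_pos ht_pos (mul_pos hqQ hFuniv_pos)
  set ω : Fin q → ℚ := fun j => c * ∑ j₀, v j₀ j with hωdef
  have hsum_le : ∀ j, (∑ j₀, v j₀ j) ≤ (q:ℚ) * θ := by
    intro j
    calc (∑ j₀, v j₀ j) ≤ ∑ _j₀ : Fin q, θ :=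
          Finset.sum_le_sum (fun i _ => (hv01 i j).2)
      _ = (q:ℚ) * θ := by
          rw [Finset.sum_const, Finset.card_univ, Fintype.card_fin, nsmul_eq_mul]
  have hωθ : ∀ j, 0 < ω j ∧ ω j ≤ θ := by
    intro j
    constructor
    · apply mul_pos hc_pos
      have h1 : θ ≤ ∑ j₀, v j₀ j := by
        rw [← hvj j]
        exact Finset.single_le_sum (fun i _ => (hv01 i j).1) (Finset.mem_univ j)
      linarith
    · have h1 : ω j ≤ c * ((q:ℚ) * θ) :=
        mul_le_mul_of_nonneg_left (hsum_le j) (le_of_lt hc_pos)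
      have h2 : c * ((q:ℚ) * θ) = (t / F Finset.univ) * θ := by
        rw [hcdef]
        field_simp
      have h3 : t / F Finset.univ ≤ 1 := by
        rw [div_le_one hFuniv_pos]
        exact hFuniv_ge
      have h4 : (t / F Finset.univ) * θ ≤ 1 * θ :=
        mul_le_mul_of_nonneg_right h3 hθ0
      rw [h2] at h1
      linarith
  -- sums over subsets
  have hωR : ∀ R : Finset (Fin q), (∑ j ∈ R, ω j) = c * ∑ j₀, ∑ j ∈ R, v j₀ j := by
    intro R
    rw [hωdef]
    simp only
    rw [← Finset.mul_sum, Finset.sum_comm]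
  have hωR_le : ∀ R : Finset (Fin q), (∑ j ∈ R, ω j) ≤ (t / F Finset.univ) * F R := by
    intro R
    rw [hωR R]
    have h1 : (∑ j₀ : Fin q, ∑ j ∈ R, v j₀ j) ≤ ∑ _j₀ : Fin q, F R :=
      Finset.sum_le_sum (fun i _ => hvcon i R)
    have h2 : (∑ _j₀ : Fin q, F R) = (q:ℚ) * F R := by
      rw [Finset.sum_const, Finset.card_univ, Fintype.card_fin, nsmul_eq_mul]
    have h3 : c * (∑ j₀ : Fin q, ∑ j ∈ R, v j₀ j) ≤ c * ((q:ℚ) * F R) := by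
      apply mul_le_mul_of_nonneg_left _ (le_of_lt hc_pos)
      rw [← h2] at *
      exact h1
    have h4 : c * ((q:ℚ) * F R) = (t / F Finset.univ) * F R := by
      rw [hcdef]
      field_simp
    linarith [h3, h4.le, h4.ge]
  refine ⟨ω, θ, hωθ, hθ1, ?_, hθM, hθN, ?_⟩
  · -- total sum
    rw [hωR Finset.univ]
    have h1 : ∀ j₀ : Fin q, (∑ j, v j₀ j) = F Finset.univ := hvsum
    have h2 : (∑ j₀ : Fin q, ∑ j, v j₀ j) = (q:ℚ) * F Finset.univ := by
      rw [Finset.sum_congr rfl (fun i _ => h1 i), Finset.sum_const, Finset.card_univ,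
        Fintype.card_fin, nsmul_eq_mul]
    rw [h2, hcdef]
    field_simp
    exact htdef
  · -- the subset constraints
    intro R hR0 hRN1
    by_cases hRN : R.card ≤ N
    · have h1 := hωR_le R
      have h2 : F R ≤ (d R : ℚ) := ff_le_d hRN
      have h3 : (t / F Finset.univ) * F R ≤ 1 * F R :=
        mul_le_mul_of_nonneg_right
          (by rw [div_le_one hFuniv_pos]; exact hFuniv_ge) (hFnonneg R)
      linarith
    · have hRcard : R.card = N + 1 := by omega
      have h1 : (∑ j ∈ R, ω j) ≤ ∑ _j ∈ R, θ :=
        Finset.sum_le_sum (fun j _ => (hωθ j).2)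
      have h2 : (∑ _j ∈ R, θ) = ((N:ℚ) + 1) * θ := by
        rw [Finset.sum_const, hRcard, nsmul_eq_mul]
        push_cast
        ring
      have h3 : ((N:ℚ)+1) * θ ≤ (k:ℚ) + 1 := by
        have h4 := mul_le_mul_of_nonneg_left hθN (by positivity : (0:ℚ) ≤ (N:ℚ)+1)
        have h5 : ((N:ℚ)+1) * (((k:ℚ)+1) / ((N:ℚ)+1)) = (k:ℚ)+1 := by
          field_simp
        linarith
      have h6 : d R = k + 1 := hdfull R (le_of_eq hRcard.symm)
      rw [h6]
      push_cast
      linarith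

end NochkaAux3

section DimSpanFacts

variable (A : Fin q → (Fin (k + 1) → ℂ))

lemma dimSpan_empty : dimSpan A ∅ = 0 := by
  simp [dimSpan]

lemma dimSpan_mono {R S : Finset (Fin q)} (h : R ⊆ S) : dimSpan A R ≤ dimSpan A S := by
  apply Submodule.finrank_mono
  exact Submodule.span_mono (Set.image_mono (by exact_mod_cast h))

lemma dimSpan_submod (R S : Finset (Fin q)) :
    dimSpan A (R ∪ S) + dimSpan A (R ∩ S) ≤ dimSpan A R + dimSpan A S := by
  classical
  have himg : A '' ((R ∪ S : Finset (Fin q)) : Set (Fin q))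
      = A '' (R : Set (Fin q)) ∪ A '' (S : Set (Fin q)) := by
    rw [Finset.coe_union, Set.image_union]
  have hU : Submodule.span ℂ (A '' ((R ∪ S : Finset (Fin q)) : Set (Fin q)))
      = Submodule.span ℂ (A '' (R : Set (Fin q))) ⊔ Submodule.span ℂ (A '' (S : Set (Fin q))) := by
    rw [himg, Submodule.span_union]
  have hI : Submodule.span ℂ (A '' ((R ∩ S : Finset (Fin q)) : Set (Fin q)))
      ≤ Submodule.span ℂ (A '' (R : Set (Fin q))) ⊓ Submodule.span ℂ (A '' (S : Set (Fin q))) := by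
    rw [le_inf_iff]
    constructor <;>
      exact Submodule.span_mono (Set.image_mono (by
        rw [Finset.coe_inter]
        first
          | exact Set.inter_subset_left
          | exact Set.inter_subset_right))
  have h1 : dimSpan A (R ∩ S) ≤ Module.finrank ℂ
      ((Submodule.span ℂ (A '' (R : Set (Fin q)))) ⊓ (Submodule.span ℂ (A '' (S : Set (Fin q))))
        : Submodule ℂ (Fin (k+1) → ℂ)) :=
    Submodule.finrank_mono hI
  have h2 := Submodule.finrank_sup_add_finrank_inf_eq
    (Submodule.span ℂ (A '' (R : Set (Fin q)))) (Submodule.span ℂ (A '' (S : Set (Fin q))))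
  simp only [dimSpan] at h1 ⊢
  rw [hU]
  omega

lemma dimSpan_card_le (R : Finset (Fin q)) : dimSpan A R ≤ R.card := by
  classical
  have h1 : (A '' (R : Set (Fin q))) = ((R.image A : Finset (Fin (k+1) → ℂ)) : Set (Fin (k+1) → ℂ)) := by
    simp [Finset.coe_image]
  rw [dimSpan, h1]
  exact le_trans (finrank_span_finset_le_card (R.image A)) (Finset.card_image_le)

lemma dimSpan_singleton (hunit : ∀ j, ∑ i, ‖A j i‖ ^ 2 = 1) (j : Fin q) :
    dimSpan A {j} = 1 := by
  have hne : A j ≠ 0 := by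
    intro h
    have := hunit j
    rw [h] at this
    simp at this
  rw [dimSpan]
  rw [Finset.coe_singleton, Set.image_singleton]
  exact finrank_span_singleton hne


/-- Nochka's theorem: for q hyperplanes in ℙ^k(ℂ) in N-subgeneral position with
q > 2N − k + 1, there exist Nochka weights ω(j) and a Nochka constant θ with the
stated properties. -/
theorem nochka (q N k : ℕ) (hk : 1 ≤ k) (hNk : k ≤ N) (hq : (q : ℤ) > 2 * N - k + 1)
    (A : Fin q → (Fin (k + 1) → ℂ))
    (hunit : ∀ j, ∑ i, ‖A j i‖ ^ 2 = 1)
    (hpos : SubgeneralPosition N A) :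
    ∃ (ω : Fin q → ℚ) (θ : ℚ),
      (∀ j, 0 < ω j ∧ ω j ≤ θ) ∧ θ ≤ 1 ∧
      (∑ j, ω j) = (k : ℚ) + 1 + θ * ((q : ℚ) - 2 * (N : ℚ) + (k : ℚ) - 1) ∧
      ((k : ℚ) + 1) / (2 * (N : ℚ) - (k : ℚ) + 1) ≤ θ ∧
      θ ≤ ((k : ℚ) + 1) / ((N : ℚ) + 1) ∧
      ∀ R : Finset (Fin q), 0 < R.card → R.card ≤ N + 1 →
        (∑ j ∈ R, ω j) ≤ (dimSpan A R : ℚ) := by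
  have hq' : 2 * N + 1 < q + k := by omega
  obtain ⟨ω, θ, h1, h2, h3, h4, h5, h6⟩ :=
    NochkaAux3.nochka_core q N k hNk hq' (dimSpan A)
      (dimSpan_empty A) (fun R S h => dimSpan_mono A h) (dimSpan_submod A)
      (dimSpan_card_le A) (dimSpan_singleton A hunit) (fun R hR => hpos R hR)
  exact ⟨ω, θ, h1, h2, h3, h4, h5, h6⟩
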